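/- Let X ∈ ℝ^{n×d} be in general position (every d×d submatrix of rows is nonsingular), and let y ∈ ℝ^n. Define L(w) = ‖Xw − y‖², w* = argmin_w L(w), and for a size-d subset S let w*(S) be the unique solution of X_S w = y_S. If S is drawn by size-d volume sampling (P(S) ∝ det(X_S)²), then E[L(w*(S))] = (d+1) · L(w*). If X is merely full rank (not in general position), the equality becomes the inequality E[L(w*(S))] ≤ (d+1) L(w*). -/

import Mathlib

open Matrix Finset

noncomputable section

/-- The submatrix of `X` consisting of the rows indexed by the subset `S`. -/
def rowSub {n d : ℕ} (X : Matrix (Fin n) (Fin d) ℝ) (S : Finset (Fin n)) :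
    Matrix {i // i ∈ S} (Fin d) ℝ :=
  X.submatrix (fun i => (i : Fin n)) id

/-- `X_S^⊤ X_S`. -/
def gram {n d : ℕ} (X : Matrix (Fin n) (Fin d) ℝ) (S : Finset (Fin n)) :
    Matrix (Fin d) (Fin d) ℝ :=
  (rowSub X S)ᵀ * rowSub X S

/-- The total square loss `L(w) = ‖Xw − y‖²` over all `n` rows. -/
def loss {n d : ℕ} (X : Matrix (Fin n) (Fin d) ℝ) (y : Fin n → ℝ) (w : Fin d → ℝ) : ℝ :=
  ∑ j, (X.mulVec w j - y j) ^ 2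

/-- The least squares solution `(X_S^⊤X_S)^{−1} X_S^⊤ y_S` of the subproblem `(X_S, y_S)`;
for `|S| = d` with `X_S` nonsingular this is the unique interpolating solution. -/
def subW {n d : ℕ} (X : Matrix (Fin n) (Fin d) ℝ) (y : Fin n → ℝ)
    (S : Finset (Fin n)) : Fin d → ℝ :=
  (gram X S)⁻¹.mulVec ((rowSub X S)ᵀ.mulVec (fun i : {x // x ∈ S} => y i.1))

/-- The full least squares solution `w* = (X^⊤X)^{−1}X^⊤ y`. -/
def optW {n d : ℕ} (X : Matrix (Fin n) (Fin d) ℝ) (y : Fin n → ℝ) : Fin d → ℝ :=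
  (Xᵀ * X)⁻¹.mulVec (Xᵀ.mulVec y)

lemma det_colop {m : ℕ} (A : Matrix (Fin (m + 1)) (Fin (m + 1)) ℝ) (w : Fin m → ℝ) :
    (A.updateCol (Fin.last m)
        (fun k => A k (Fin.last m) - ∑ b, w b * A k b.castSucc)).det = A.det := by
  have hc : (fun k => A k (Fin.last m) - ∑ b, w b * A k b.castSucc)
      = fun k => ∑ i, (Fin.snoc (fun b => -w b) 1 : Fin (m + 1) → ℝ) i • A k i := by
    funext k
    rw [Fin.sum_univ_castSucc]
    simp only [Fin.snoc_castSucc, Fin.snoc_last, smul_eq_mul, one_mul, sub_eq_add_neg]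
    rw [add_comm, ← Finset.sum_neg_distrib]
    congr 1
    exact Finset.sum_congr rfl fun b _ => by ring
  rw [hc, Matrix.det_updateCol_sum]
  simp [Fin.snoc_last]

lemma det_expand_last_col {m : ℕ} (A : Matrix (Fin (m + 1)) (Fin (m + 1)) ℝ) (i0 : Fin (m + 1))
    (h : ∀ i, i ≠ i0 → A i (Fin.last m) = 0) :
    A.det = (-1) ^ ((i0 : ℕ) + m) * A i0 (Fin.last m) *
      (A.submatrix i0.succAbove Fin.castSucc).det := by
  rw [Matrix.det_succ_column A (Fin.last m)]
  rw [Finset.sum_eq_single i0]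
  · simp [Fin.succAbove_last, Fin.val_last]
  · intro i _ hi
    simp [h i hi]
  · simp

/-- The augmented matrix `[X | y]`. -/
def XAug {n d : ℕ} (X : Matrix (Fin n) (Fin d) ℝ) (y : Fin n → ℝ) :
    Matrix (Fin n) (Fin (d + 1)) ℝ := fun i => Fin.snoc (X i) (y i)

/-- `B_S^⊤ B_S` for a general rectangular `B`. -/
def gram2 {n m : ℕ} (B : Matrix (Fin n) (Fin m) ℝ) (S : Finset (Fin n)) :
    Matrix (Fin m) (Fin m) ℝ :=
  (B.submatrix (fun i : {i // i ∈ S} => (i : Fin n)) id)ᵀ *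
    B.submatrix (fun i : {i // i ∈ S} => (i : Fin n)) id

lemma gram2_eq_orderEmb {n m : ℕ} (B : Matrix (Fin n) (Fin m) ℝ) {S : Finset (Fin n)}
    (h : S.card = m) :
    gram2 B S = (B.submatrix (S.orderEmbOfFin h) id)ᵀ * B.submatrix (S.orderEmbOfFin h) id := by
  ext a b
  simp only [gram2, mul_apply, transpose_apply, submatrix_apply, id_eq]
  rw [← Equiv.sum_comp (S.orderIsoOfFin h).toEquiv
    (fun i : {i // i ∈ S} => B (i : Fin n) a * B (i : Fin n) b)]
  refine Finset.sum_congr rfl fun k _ => ?_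
  simp [Finset.coe_orderIsoOfFin_apply]

lemma det_gram2 {n m : ℕ} (B : Matrix (Fin n) (Fin m) ℝ) {S : Finset (Fin n)}
    (h : S.card = m) :
    (gram2 B S).det = (B.submatrix (S.orderEmbOfFin h) id).det ^ 2 := by
  rw [gram2_eq_orderEmb B h, det_mul, det_transpose, sq]

lemma gram2_det_nonneg {n m : ℕ} (B : Matrix (Fin n) (Fin m) ℝ) {S : Finset (Fin n)}
    (h : S.card = m) : 0 ≤ (gram2 B S).det := by
  rw [det_gram2 B h]; positivity

/-- Cauchy–Binet, in Gram determinant form. -/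
theorem det_transpose_mul_self_eq_sum {n m : ℕ} (B : Matrix (Fin n) (Fin m) ℝ) :
    (Bᵀ * B).det = ∑ S ∈ powersetCard m (univ : Finset (Fin n)), (gram2 B S).det := by
  classical
  set term : (Fin m → Fin n) → ℝ :=
    fun p => (∏ a, B (p a) a) * (B.submatrix p id).det with hterm
  -- Step 1: expand the determinant over all row-selection functions
  have h1 : (Bᵀ * B).det = ∑ p : Fin m → Fin n, term p := by
    have hrows : Bᵀ * B = Matrix.of (fun a => ∑ k : Fin n, B k a • B k) := by
      ext a b
      simp [Matrix.mul_apply, Finset.sum_apply]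
    rw [hrows]
    have hms := (Matrix.detRowAlternating :
        (Fin m → ℝ) [⋀^Fin m]→ₗ[ℝ] ℝ).toMultilinearMap.map_sum
      (g := fun (a : Fin m) (k : Fin n) => B k a • B k)
    have hdet0 : (Matrix.of (fun a => ∑ k : Fin n, B k a • B k)).det
        = (Matrix.detRowAlternating : (Fin m → ℝ) [⋀^Fin m]→ₗ[ℝ] ℝ).toMultilinearMap
          (fun a => ∑ k : Fin n, B k a • B k) := rfl
    rw [hdet0, hms]
    refine Finset.sum_congr rfl fun p _ => ?_
    have hsmul := (Matrix.detRowAlternating :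
        (Fin m → ℝ) [⋀^Fin m]→ₗ[ℝ] ℝ).toMultilinearMap.map_smul_univ
      (fun a => B (p a) a) (fun a => B (p a))
    rw [hsmul]
    simp only [smul_eq_mul, hterm]
    rfl
  -- Step 2: non-injective selections contribute zero
  have h2 : ∀ p : Fin m → Fin n, ¬ Function.Injective p → term p = 0 := by
    intro p hp
    rw [Function.not_injective_iff] at hp
    obtain ⟨a, b, hab, hne⟩ := hp
    have : (B.submatrix p id).det = 0 :=
      Matrix.det_zero_of_row_eq hne (funext fun c => by simp [hab])
    rw [hterm]
    simp [this]
  have h3 : (Bᵀ * B).det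
      = ∑ p ∈ Finset.univ.filter (fun p : Fin m → Fin n => Function.Injective p), term p := by
    rw [h1, Finset.sum_filter_of_ne]
    intro p _ hne
    by_contra hni
    exact hne (h2 p hni)
  -- the inner sum over permutations for a fixed subset
  have hinner : ∀ S : Finset (Fin n), ∀ hS : S.card = m,
      ∑ σ : Equiv.Perm (Fin m), term (fun a => S.orderEmbOfFin hS (σ a))
        = (gram2 B S).det := by
    intro S hS
    set N := B.submatrix (S.orderEmbOfFin hS) id with hNdef
    have hstep : ∀ σ : Equiv.Perm (Fin m),
        term (fun a => S.orderEmbOfFin hS (σ a))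
          = ((Equiv.Perm.sign σ : ℤ) : ℝ) * (∏ a, N (σ a) a) * N.det := by
      intro σ
      have hsub : B.submatrix (fun a => S.orderEmbOfFin hS (σ a)) id
          = N.submatrix σ id := rfl
      rw [hterm]
      simp only [hsub, Matrix.det_permute σ N]
      have : ∀ a, B (S.orderEmbOfFin hS (σ a)) a = N (σ a) a := fun a => rfl
      simp only [this]
      ring
    rw [Finset.sum_congr rfl fun σ _ => hstep σ, ← Finset.sum_mul]
    rw [← Matrix.det_apply' N, det_gram2 B hS, ← hNdef, sq]
  -- Step 3: reindex injective selections by (subset, permutation) pairs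
  set F : (Σ _S : Finset (Fin n), Equiv.Perm (Fin m)) → ℝ :=
    fun x => if h : x.1.card = m then term (fun a => x.1.orderEmbOfFin h (x.2 a)) else 0
    with hF
  have h4 : ∑ x ∈ (powersetCard m (univ : Finset (Fin n))).sigma
        (fun _ => (Finset.univ : Finset (Equiv.Perm (Fin m)))), F x
      = ∑ p ∈ Finset.univ.filter (fun p : Fin m → Fin n => Function.Injective p), term p := by
    refine Finset.sum_bij
      (fun x hx => fun a => x.1.orderEmbOfFin
        (Finset.mem_powersetCard_univ.mp (Finset.mem_sigma.mp hx).1) (x.2 a)) ?_ ?_ ?_ ?_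
    · rintro ⟨S, σ⟩ hx
      simp only [Finset.mem_filter, Finset.mem_univ, true_and]
      exact (S.orderEmbOfFin _).injective.comp σ.injective
    · rintro ⟨S₁, σ₁⟩ h₁ ⟨S₂, σ₂⟩ h₂ heq
      have hc₁ := Finset.mem_powersetCard_univ.mp (Finset.mem_sigma.mp h₁).1
      have hc₂ := Finset.mem_powersetCard_univ.mp (Finset.mem_sigma.mp h₂).1
      have himg : ∀ (S : Finset (Fin n)) (hS : S.card = m) (σ : Equiv.Perm (Fin m)),
          Finset.image (fun a => S.orderEmbOfFin hS (σ a)) Finset.univ = S := by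
        intro S hS σ
        apply Finset.eq_of_subset_of_card_le
        · intro i hi
          simp only [Finset.mem_image] at hi
          obtain ⟨a, _, rfl⟩ := hi
          exact Finset.orderEmbOfFin_mem S hS (σ a)
        · have hinj : Function.Injective (fun a => S.orderEmbOfFin hS (σ a)) :=
            fun a b hab => σ.injective ((S.orderEmbOfFin hS).injective hab)
          rw [hS, Finset.card_image_of_injective _ hinj, Finset.card_univ, Fintype.card_fin]
      have heq' : (fun a => S₁.orderEmbOfFin hc₁ (σ₁ a))
          = fun a => S₂.orderEmbOfFin hc₂ (σ₂ a) := heq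
      have hSS : S₁ = S₂ := by
        rw [← himg S₁ hc₁ σ₁, ← himg S₂ hc₂ σ₂, heq']
      subst hSS
      have hσ : σ₁ = σ₂ := by
        ext a
        exact congrArg Fin.val ((S₁.orderEmbOfFin hc₁).injective (congrFun heq' a))
      rw [hσ]
    · intro p hp
      have hpinj : Function.Injective p := (Finset.mem_filter.mp hp).2
      set S : Finset (Fin n) := Finset.image p Finset.univ with hSdef
      have hcard : S.card = m := by
        rw [hSdef, Finset.card_image_of_injective _ hpinj, Finset.card_univ, Fintype.card_fin]
      have hmemp : ∀ a, p a ∈ S := fun a => Finset.mem_image_of_mem p (Finset.mem_univ a)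
      set g : Fin m → Fin m := fun a => (S.orderIsoOfFin hcard).symm ⟨p a, hmemp a⟩ with hg
      have hginj : Function.Injective g := by
        intro a b hab
        apply hpinj
        have := congrArg (S.orderIsoOfFin hcard) hab
        rw [hg] at this
        simp only [OrderIso.apply_symm_apply] at this
        exact congrArg Subtype.val this
      set σ : Equiv.Perm (Fin m) :=
        Equiv.ofBijective g (Finite.injective_iff_bijective.mp hginj) with hσ
      refine ⟨⟨S, σ⟩, Finset.mem_sigma.mpr ⟨Finset.mem_powersetCard_univ.mpr hcard,
        Finset.mem_univ _⟩, ?_⟩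
      funext a
      show (S.orderEmbOfFin hcard) (σ a) = p a
      have hga : σ a = (S.orderIsoOfFin hcard).symm ⟨p a, hmemp a⟩ := rfl
      rw [hga, ← Finset.coe_orderIsoOfFin_apply, OrderIso.apply_symm_apply]
    · rintro ⟨S, σ⟩ hx
      have hc := Finset.mem_powersetCard_univ.mp (Finset.mem_sigma.mp hx).1
      rw [hF]
      simp only [dif_pos hc]
  rw [h3, ← h4, Finset.sum_sigma]
  refine Finset.sum_congr rfl fun S hS => ?_
  have hc := Finset.mem_powersetCard_univ.mp hS
  rw [← hinner S hc]
  refine Finset.sum_congr rfl fun σ _ => ?_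
  rw [hF]
  simp only [dif_pos hc]

lemma gram_eq_gram2 {n d : ℕ} (X : Matrix (Fin n) (Fin d) ℝ) (S : Finset (Fin n)) :
    gram X S = gram2 X S := rfl

/-- Interpolation: with an invertible Gram matrix, the subproblem solution fits its rows. -/
lemma subW_interpolates {n d : ℕ} (X : Matrix (Fin n) (Fin d) ℝ) (y : Fin n → ℝ)
    {S : Finset (Fin n)} (hS : S.card = d) (hdet : (gram X S).det ≠ 0) :
    ∀ i ∈ S, X.mulVec (subW X y S) i = y i := by
  classical
  set e := S.orderEmbOfFin hS with he
  set M := X.submatrix e id with hM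
  have hdM : M.det ≠ 0 := by
    intro h0
    apply hdet
    rw [gram_eq_gram2, det_gram2 X hS, ← hM, h0]
    ring
  have hMunit : IsUnit M.det := isUnit_iff_ne_zero.mpr hdM
  have hMTunit : IsUnit (Mᵀ).det := by rwa [Matrix.det_transpose]
  have hsub : subW X y S = M⁻¹.mulVec (fun k => y (e k)) := by
    unfold subW
    have h1 : (rowSub X S)ᵀ.mulVec (fun i : {x // x ∈ S} => y i.1)
        = Mᵀ.mulVec (fun k => y (e k)) := by
      funext a
      simp only [Matrix.mulVec, dotProduct, Matrix.transpose_apply, rowSub,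
        Matrix.submatrix_apply, id_eq, hM]
      rw [← Equiv.sum_comp (S.orderIsoOfFin hS).toEquiv
        (fun i : {x // x ∈ S} => X (i : Fin n) a * y (i : Fin n))]
      exact Finset.sum_congr rfl fun k _ => by
        simp [Finset.coe_orderIsoOfFin_apply, he]
    rw [h1, gram_eq_gram2, gram2_eq_orderEmb X hS, ← he, ← hM, Matrix.mulVec_mulVec,
      Matrix.mul_inv_rev, Matrix.mul_assoc, Matrix.nonsing_inv_mul _ hMTunit, Matrix.mul_one]
  have hMev : M.mulVec (subW X y S) = fun k => y (e k) := by
    rw [hsub, Matrix.mulVec_mulVec, Matrix.mul_nonsing_inv _ hMunit, Matrix.one_mulVec]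
  intro i hi
  set k := (S.orderIsoOfFin hS).symm ⟨i, hi⟩ with hk
  have hek : e k = i := by
    simp only [he, ← Finset.coe_orderIsoOfFin_apply, hk, OrderIso.apply_symm_apply]
  have h2 : X.mulVec (subW X y S) i = M.mulVec (subW X y S) k := by
    simp [Matrix.mulVec, dotProduct, hM, hek]
  rw [h2, hMev]
  exact congrArg y hek

/-- Key residual identity. -/
lemma det_gram2_insert {n d : ℕ} (X : Matrix (Fin n) (Fin d) ℝ) (y : Fin n → ℝ)
    {S : Finset (Fin n)} {j : Fin n} (hS : S.card = d) (hj : j ∉ S)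
    (hdet : (gram X S).det ≠ 0) :
    (gram2 (XAug X y) (insert j S)).det
      = (gram X S).det * (X.mulVec (subW X y S) j - y j) ^ 2 := by
  classical
  set w := subW X y S with hw
  set T := insert j S with hT
  have hTc : T.card = d + 1 := by rw [hT, Finset.card_insert_of_notMem hj, hS]
  set eT := T.orderEmbOfFin hTc with heT
  set N := (XAug X y).submatrix eT id with hN
  have hdetT : (gram2 (XAug X y) T).det = N.det ^ 2 := det_gram2 _ hTc
  set eS := S.orderEmbOfFin hS with heS
  set M := X.submatrix eS id with hM
  have hdetS : (gram X S).det = M.det ^ 2 := by rw [gram_eq_gram2]; exact det_gram2 X hS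
  have hcol : ∀ k, N k (Fin.last d) - ∑ b, w b * N k b.castSucc
      = y (eT k) - X.mulVec w (eT k) := by
    intro k
    simp only [hN, Matrix.submatrix_apply, id_eq, XAug, Fin.snoc_last, Fin.snoc_castSucc,
      Matrix.mulVec, dotProduct]
    congr 1
    exact Finset.sum_congr rfl fun b _ => mul_comm _ _
  set N' := N.updateCol (Fin.last d)
    (fun k => N k (Fin.last d) - ∑ b, w b * N k b.castSucc) with hN'
  have hdet' : N'.det = N.det := det_colop N w
  set a0 := (T.orderIsoOfFin hTc).symm ⟨j, Finset.mem_insert_self j S⟩ with ha0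
  have hea0 : (eT a0 : Fin n) = j := by
    simp only [heT, ← Finset.coe_orderIsoOfFin_apply, ha0, OrderIso.apply_symm_apply]
  have hmemS : ∀ k, k ≠ a0 → (eT k : Fin n) ∈ S := by
    intro k hk
    have h1 : (eT k : Fin n) ∈ T := Finset.orderEmbOfFin_mem T hTc k
    have h2 : (eT k : Fin n) ≠ j := by
      intro h
      exact hk (eT.injective (by rw [h, hea0]))
    rcases Finset.mem_insert.mp h1 with h | h
    · exact absurd h h2
    · exact h
  have hz : ∀ i, i ≠ a0 → N' i (Fin.last d) = 0 := by
    intro i hi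
    rw [hN', Matrix.updateCol_self, hcol]
    rw [hw, subW_interpolates X y hS hdet (eT i) (hmemS i hi), sub_self]
  have hval : N' a0 (Fin.last d) = y j - X.mulVec w j := by
    rw [hN', Matrix.updateCol_self, hcol, hea0]
  have hsm : StrictMono (fun k : Fin d => (eT (a0.succAbove k) : Fin n)) :=
    (T.orderEmbOfFin hTc).strictMono.comp (Fin.strictMono_succAbove a0)
  have hmem' : ∀ k, (eT (a0.succAbove k) : Fin n) ∈ S :=
    fun k => hmemS _ (Fin.succAbove_ne a0 k)
  have huniq : (fun k : Fin d => (eT (a0.succAbove k) : Fin n)) = ⇑(S.orderEmbOfFin hS) :=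
    Finset.orderEmbOfFin_unique hS hmem' hsm
  have hminor : N'.submatrix a0.succAbove Fin.castSucc = M := by
    ext k b
    simp only [Matrix.submatrix_apply, hN']
    rw [Matrix.updateCol_ne (Fin.castSucc_lt_last b).ne]
    simp only [hN, Matrix.submatrix_apply, id_eq, XAug, Fin.snoc_castSucc, hM, heS]
    rw [← congrFun huniq k]
  have hexp := det_expand_last_col N' a0 hz
  rw [hminor, hval] at hexp
  rw [hdetT, ← hdet', hexp, hdetS]
  rw [mul_pow, mul_pow, ← pow_mul, mul_comm ((a0 : ℕ) + d) 2, pow_mul]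
  norm_num
  ring

/-- Schur-type identity for the full problem. -/
lemma det_aug_gram {n d : ℕ} (X : Matrix (Fin n) (Fin d) ℝ) (y : Fin n → ℝ)
    (hdet : (Xᵀ * X).det ≠ 0) :
    ((XAug X y)ᵀ * XAug X y).det = (Xᵀ * X).det * loss X y (optW X y) := by
  classical
  set w := optW X y with hw
  set r := fun i => y i - X.mulVec w i with hr
  have hne : ∀ b, ∑ i, X i b * r i = 0 := by
    have h1 : (Xᵀ * X).mulVec w = Xᵀ.mulVec y := by
      rw [hw]
      unfold optW
      rw [Matrix.mulVec_mulVec,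
        Matrix.mul_nonsing_inv _ (isUnit_iff_ne_zero.mpr hdet), Matrix.one_mulVec]
    intro b
    have h2 := congrFun h1 b
    simp only [Matrix.mulVec, dotProduct, Matrix.mul_apply,
      Matrix.transpose_apply] at h2
    have h3 : ∑ i, X i b * r i = ∑ i, X i b * y i - ∑ i, X i b * X.mulVec w i := by
      rw [← Finset.sum_sub_distrib]
      exact Finset.sum_congr rfl fun i _ => by rw [hr]; ring
    rw [h3, sub_eq_zero]
    rw [← h2]
    simp only [Matrix.mulVec, dotProduct, Finset.sum_mul, Finset.mul_sum]
    rw [Finset.sum_comm]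
    exact Finset.sum_congr rfl fun i _ => Finset.sum_congr rfl fun c _ => by ring
  have hloss : loss X y w = ∑ i, y i * r i := by
    have h4 : loss X y w = ∑ i, r i * r i := by
      unfold loss
      exact Finset.sum_congr rfl fun i _ => by rw [hr]; ring
    have h5 : ∑ i, (X.mulVec w i) * r i = 0 := by
      have : ∑ i, (X.mulVec w i) * r i = ∑ b, w b * ∑ i, X i b * r i := by
        simp only [Matrix.mulVec, dotProduct, Finset.sum_mul, Finset.mul_sum]
        rw [Finset.sum_comm]
        exact Finset.sum_congr rfl fun i _ => Finset.sum_congr rfl fun b _ => by ring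
      rw [this]
      simp only [hne, mul_zero, Finset.sum_const_zero]
    have h6 : ∑ i, y i * r i - ∑ i, (X.mulVec w i) * r i = ∑ i, r i * r i := by
      rw [← Finset.sum_sub_distrib]
      exact Finset.sum_congr rfl fun i _ => by rw [hr]; ring
    rw [h4, ← h6, h5, sub_zero]
  set H := (XAug X y)ᵀ * XAug X y with hH
  have hcol : ∀ k, H k (Fin.last d) - ∑ b, w b * H k b.castSucc
      = ∑ i, XAug X y i k * r i := by
    intro k
    have e1 : H k (Fin.last d) = ∑ i, XAug X y i k * y i := by
      simp [hH, Matrix.mul_apply, XAug, Fin.snoc_last]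
    have e2 : ∑ b, w b * H k b.castSucc = ∑ i, XAug X y i k * X.mulVec w i := by
      simp only [hH, Matrix.mul_apply, Matrix.transpose_apply, Finset.mul_sum]
      rw [Finset.sum_comm]
      refine Finset.sum_congr rfl fun i _ => ?_
      simp only [Matrix.mulVec, dotProduct, Finset.mul_sum, XAug, Fin.snoc_castSucc]
      exact Finset.sum_congr rfl fun b _ => by ring
    rw [e1, e2, ← Finset.sum_sub_distrib]
    exact Finset.sum_congr rfl fun i _ => by rw [hr]; ring
  set H' := H.updateCol (Fin.last d)
    (fun k => H k (Fin.last d) - ∑ b, w b * H k b.castSucc) with hH'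
  have hdet' : H'.det = H.det := det_colop H w
  have hz : ∀ i, i ≠ Fin.last d → H' i (Fin.last d) = 0 := by
    intro i hi
    obtain ⟨a, rfl⟩ : ∃ a : Fin d, a.castSucc = i := by
      rcases Fin.eq_castSucc_or_eq_last i with ⟨a, ha⟩ | h
      · exact ⟨a, ha.symm⟩
      · exact absurd h hi
    rw [hH', Matrix.updateCol_self, hcol]
    calc ∑ i, XAug X y i a.castSucc * r i = ∑ i, X i a * r i := by
          refine Finset.sum_congr rfl fun i _ => by simp [XAug, Fin.snoc_castSucc]
      _ = 0 := hne a
  have hlast : H' (Fin.last d) (Fin.last d) = loss X y w := by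
    rw [hH', Matrix.updateCol_self, hcol, hloss]
    refine Finset.sum_congr rfl fun i _ => by simp [XAug, Fin.snoc_last]
  have hminor : H'.submatrix (Fin.last d).succAbove Fin.castSucc = Xᵀ * X := by
    ext a b
    rw [Fin.succAbove_last]
    simp only [Matrix.submatrix_apply, hH']
    rw [Matrix.updateCol_ne (Fin.castSucc_lt_last b).ne]
    simp [hH, Matrix.mul_apply, XAug, Fin.snoc_castSucc]
  have hexp := det_expand_last_col H' (Fin.last d) hz
  rw [hminor, hlast] at hexp
  rw [← hdet', hexp, Fin.val_last, ← two_mul, pow_mul]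
  norm_num
  ring

/-- Double counting pairs `(S, j)`, `j ∉ S`, against `T = S ∪ {j}`. -/
lemma double_count {n d : ℕ} (G : Finset (Fin n) → ℝ) :
    ∑ S ∈ powersetCard d (univ : Finset (Fin n)), ∑ j ∈ Sᶜ, G (insert j S)
      = ((d : ℝ) + 1) * ∑ T ∈ powersetCard (d + 1) (univ : Finset (Fin n)), G T := by
  have hrhs : ((d : ℝ) + 1) * ∑ T ∈ powersetCard (d + 1) (univ : Finset (Fin n)), G T
      = ∑ T ∈ powersetCard (d + 1) (univ : Finset (Fin n)), ∑ j ∈ T, G T := by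
    rw [Finset.mul_sum]
    refine Finset.sum_congr rfl fun T hT => ?_
    have hcard : T.card = d + 1 := (Finset.mem_powersetCard_univ.mp hT)
    rw [Finset.sum_const, nsmul_eq_mul, hcard]
    push_cast
    ring
  rw [hrhs, Finset.sum_sigma' _ _ (fun S j => G (insert j S)),
    Finset.sum_sigma' _ _ (fun T _ => G T)]
  refine Finset.sum_nbij' (fun x => ⟨insert x.2 x.1, x.2⟩) (fun x => ⟨x.1.erase x.2, x.2⟩)
    ?_ ?_ ?_ ?_ ?_
  · rintro ⟨S, j⟩ hx
    simp only [Finset.mem_sigma, Finset.mem_powersetCard_univ, Finset.mem_compl] at hx ⊢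
    exact ⟨by rw [Finset.card_insert_of_notMem hx.2, hx.1], Finset.mem_insert_self _ _⟩
  · rintro ⟨T, j⟩ hx
    simp only [Finset.mem_sigma, Finset.mem_powersetCard_univ, Finset.mem_compl] at hx ⊢
    exact ⟨by rw [Finset.card_erase_of_mem hx.2, hx.1]; rfl, Finset.notMem_erase _ _⟩
  · rintro ⟨S, j⟩ hx
    simp only [Finset.mem_sigma, Finset.mem_powersetCard_univ, Finset.mem_compl] at hx
    simp [Finset.erase_insert hx.2]
  · rintro ⟨T, j⟩ hx
    simp only [Finset.mem_sigma, Finset.mem_powersetCard_univ, Finset.mem_compl] at hx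
    simp [Finset.insert_erase hx.2]
  · rintro ⟨S, j⟩ hx
    simp only [Finset.mem_sigma, Finset.mem_powersetCard_univ, Finset.mem_compl] at hx
    rfl

set_option maxHeartbeats 1000000 in
/-- The expected loss of the size-`d` volume sampled least squares estimator equals
`(d+1) L(w*)` when `X` is in general position, and is at most `(d+1) L(w*)` in general. -/
theorem volume_sampling_expected_loss {n d : ℕ} (X : Matrix (Fin n) (Fin d) ℝ)
    (y : Fin n → ℝ) (hrank : X.rank = d) :
    ((∀ S : Finset (Fin n), S.card = d → (gram X S).det ≠ 0) →
      ∑ S ∈ Finset.powersetCard d (Finset.univ : Finset (Fin n)),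
          ((gram X S).det / (Xᵀ * X).det) * loss X y (subW X y S)
        = ((d : ℝ) + 1) * loss X y (optW X y))
    ∧ ∑ S ∈ Finset.powersetCard d (Finset.univ : Finset (Fin n)),
          ((gram X S).det / (Xᵀ * X).det) * loss X y (subW X y S)
        ≤ ((d : ℝ) + 1) * loss X y (optW X y) := by
  classical
  set D := (Xᵀ * X).det with hD
  have hCB : D = ∑ S ∈ powersetCard d (univ : Finset (Fin n)), (gram X S).det := by
    rw [hD, det_transpose_mul_self_eq_sum X]
    exact Finset.sum_congr rfl fun S _ => by rw [gram_eq_gram2]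
  have hnonneg : ∀ S ∈ powersetCard d (univ : Finset (Fin n)), 0 ≤ (gram X S).det :=
    fun S hS => by
      rw [gram_eq_gram2]
      exact gram2_det_nonneg X (Finset.mem_powersetCard_univ.mp hS)
  have hDnn : 0 ≤ D := hCB ▸ Finset.sum_nonneg hnonneg
  have key : ∀ S ∈ powersetCard d (univ : Finset (Fin n)), (gram X S).det ≠ 0 →
      (gram X S).det * loss X y (subW X y S)
        = ∑ j ∈ Sᶜ, (gram2 (XAug X y) (insert j S)).det := by
    intro S hS hne
    have hcard := Finset.mem_powersetCard_univ.mp hS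
    have hloss : loss X y (subW X y S) = ∑ j ∈ Sᶜ, (X.mulVec (subW X y S) j - y j) ^ 2 := by
      unfold loss
      rw [← Finset.sum_add_sum_compl S]
      have h0 : ∑ j ∈ S, (X.mulVec (subW X y S) j - y j) ^ 2 = 0 :=
        Finset.sum_eq_zero fun j hj => by
          rw [subW_interpolates X y hcard hne j hj]; ring
      rw [h0, zero_add]
    rw [hloss, Finset.mul_sum]
    refine Finset.sum_congr rfl fun j hj => ?_
    rw [det_gram2_insert X y hcard (Finset.mem_compl.mp hj) hne]
  have htot : ∑ T ∈ powersetCard (d + 1) (univ : Finset (Fin n)), (gram2 (XAug X y) T).det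
      = ((XAug X y)ᵀ * XAug X y).det := (det_transpose_mul_self_eq_sum (XAug X y)).symm
  have hlossnn : 0 ≤ loss X y (optW X y) :=
    Finset.sum_nonneg fun j _ => sq_nonneg _
  have hineq : ∀ hDne : D ≠ 0,
      ∑ S ∈ powersetCard d (univ : Finset (Fin n)),
          (gram X S).det * loss X y (subW X y S)
        ≤ ((d : ℝ) + 1) * (D * loss X y (optW X y)) := by
    intro hDne
    have step1 : ∑ S ∈ powersetCard d (univ : Finset (Fin n)),
        (gram X S).det * loss X y (subW X y S)
        ≤ ∑ S ∈ powersetCard d (univ : Finset (Fin n)),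
          ∑ j ∈ Sᶜ, (gram2 (XAug X y) (insert j S)).det := by
      refine Finset.sum_le_sum fun S hS => ?_
      by_cases hne : (gram X S).det = 0
      · rw [hne, zero_mul]
        refine Finset.sum_nonneg fun j hj => ?_
        have hcard := Finset.mem_powersetCard_univ.mp hS
        have : (insert j S).card = d + 1 := by
          rw [Finset.card_insert_of_notMem (Finset.mem_compl.mp hj), hcard]
        exact gram2_det_nonneg _ this
      · rw [key S hS hne]
    calc ∑ S ∈ powersetCard d (univ : Finset (Fin n)),
          (gram X S).det * loss X y (subW X y S)
        ≤ ∑ S ∈ powersetCard d (univ : Finset (Fin n)),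
            ∑ j ∈ Sᶜ, (gram2 (XAug X y) (insert j S)).det := step1
      _ = ((d : ℝ) + 1) * ∑ T ∈ powersetCard (d + 1) (univ : Finset (Fin n)),
            (gram2 (XAug X y) T).det := double_count (fun T => (gram2 (XAug X y) T).det)
      _ = ((d : ℝ) + 1) * (D * loss X y (optW X y)) := by
          rw [htot, det_aug_gram X y hDne]
  have hsumdiv : ∑ S ∈ Finset.powersetCard d (Finset.univ : Finset (Fin n)),
      ((gram X S).det / (Xᵀ * X).det) * loss X y (subW X y S)
      = (∑ S ∈ powersetCard d (univ : Finset (Fin n)),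
          (gram X S).det * loss X y (subW X y S)) / D := by
    rw [Finset.sum_div]
    exact Finset.sum_congr rfl fun S _ => by rw [← hD]; ring
  constructor
  · intro hgen
    have hdn : d ≤ n := by
      have := Matrix.rank_le_card_height X
      rw [hrank, Fintype.card_fin] at this
      exact this
    obtain ⟨S₀, _, hS₀c⟩ := Finset.exists_subset_card_eq (s := (univ : Finset (Fin n))) (n := d)
      (by rw [Finset.card_univ, Fintype.card_fin]; exact hdn)
    have hS₀ : S₀ ∈ powersetCard d (univ : Finset (Fin n)) :=
      Finset.mem_powersetCard_univ.mpr hS₀c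
    have hDpos : 0 < D := by
      rw [hCB]
      refine Finset.sum_pos' hnonneg ⟨S₀, hS₀, ?_⟩
      exact lt_of_le_of_ne (hnonneg S₀ hS₀) (Ne.symm (hgen S₀ hS₀c))
    have hDne : D ≠ 0 := ne_of_gt hDpos
    have heq : ∑ S ∈ powersetCard d (univ : Finset (Fin n)),
        (gram X S).det * loss X y (subW X y S)
        = ((d : ℝ) + 1) * (D * loss X y (optW X y)) := by
      calc ∑ S ∈ powersetCard d (univ : Finset (Fin n)),
            (gram X S).det * loss X y (subW X y S)
          = ∑ S ∈ powersetCard d (univ : Finset (Fin n)),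
              ∑ j ∈ Sᶜ, (gram2 (XAug X y) (insert j S)).det :=
            Finset.sum_congr rfl fun S hS =>
              key S hS (hgen S (Finset.mem_powersetCard_univ.mp hS))
        _ = ((d : ℝ) + 1) * ∑ T ∈ powersetCard (d + 1) (univ : Finset (Fin n)),
              (gram2 (XAug X y) T).det := double_count (fun T => (gram2 (XAug X y) T).det)
        _ = ((d : ℝ) + 1) * (D * loss X y (optW X y)) := by
            rw [htot, det_aug_gram X y hDne]
    rw [hsumdiv, heq]
    field_simp
  · by_cases hDne : D = 0
    · rw [hsumdiv, hDne, div_zero]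
      positivity
    · rw [hsumdiv]
      rw [div_le_iff₀ (lt_of_le_of_ne hDnn (Ne.symm hDne))]
      calc ∑ S ∈ powersetCard d (univ : Finset (Fin n)),
            (gram X S).det * loss X y (subW X y S)
          ≤ ((d : ℝ) + 1) * (D * loss X y (optW X y)) := hineq hDne
        _ = ((d : ℝ) + 1) * loss X y (optW X y) * D := by ring
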